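/- Let ξ_1, …, ξ_n be i.i.d. standard normal, let q ≤ 0.4·n be a positive integer, and write m = Φ̄^{−1}(q/n) ≥ 0. Then for every x with 0 < x ≤ q/8, the q-th smallest order statistic ξ_{(q)} satisfies P( ξ_{(q)} + m ≤ −(2/m)·√(2x/q) ) ≤ e^{−x}. -/

import Mathlib

open MeasureTheory ProbabilityTheory Real

/-- Standard normal density. -/
noncomputable def gphi (t : ℝ) : ℝ := (Real.sqrt (2 * Real.pi))⁻¹ * Real.exp (-(t ^ 2) / 2)

/-- Standard normal upper-tail (survival) function. -/
noncomputable def Phibar (t : ℝ) : ℝ := ∫ s in Set.Ioi t, gphi s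

/-- Inverse of the standard normal upper-tail function. -/
noncomputable def PhibarInv (x : ℝ) : ℝ := Function.invFun Phibar x

/-- The `q`-th smallest value among `ξ 0, …, ξ (n-1)`. -/
noncomputable def orderStat {n : ℕ} (ξ : Fin n → ℝ) (q : ℕ) : ℝ :=
  sInf {t : ℝ | q ≤ (Finset.univ.filter fun i => ξ i ≤ t).card}

namespace OSD

open Set Filter

lemma gphi_eq : gphi = gaussianPDFReal 0 1 := by
  ext t
  simp only [gphi, gaussianPDFReal, NNReal.coe_one, mul_one, sub_zero, neg_div]

lemma gphi_pos (t : ℝ) : 0 < gphi t :=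
  mul_pos (inv_pos.2 (Real.sqrt_pos.2 (by positivity))) (Real.exp_pos _)

lemma gphi_integrable : Integrable gphi := by
  rw [gphi_eq]; exact integrable_gaussianPDFReal 0 1

lemma gphi_anti {a b : ℝ} (ha : 0 ≤ a) (hab : a ≤ b) : gphi b ≤ gphi a := by
  have h := Real.exp_le_exp.2 (show -(b ^ 2) / 2 ≤ -(a ^ 2) / 2 by nlinarith)
  exact mul_le_mul_of_nonneg_left h (by positivity)

lemma gphi_even (t : ℝ) : gphi (-t) = gphi t := by simp [gphi]

lemma Phibar_nonneg (t : ℝ) : 0 ≤ Phibar t :=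
  setIntegral_nonneg measurableSet_Ioi fun s _ => (gphi_pos s).le

lemma Phibar_diff {a b : ℝ} (hab : a ≤ b) :
    Phibar a - Phibar b = ∫ s in Set.Ioc a b, gphi s := by
  have h : Set.Ioi a = Set.Ioc a b ∪ Set.Ioi b := (Set.Ioc_union_Ioi_eq_Ioi hab).symm
  rw [Phibar, Phibar, h, setIntegral_union (Set.Ioc_disjoint_Ioi le_rfl) measurableSet_Ioi
    gphi_integrable.integrableOn gphi_integrable.integrableOn]
  ring

lemma Phibar_anti : Antitone Phibar := by
  intro a b hab
  have h := Phibar_diff hab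
  have h2 : 0 ≤ ∫ s in Set.Ioc a b, gphi s :=
    setIntegral_nonneg measurableSet_Ioc fun s _ => (gphi_pos s).le
  linarith

lemma Phibar_pos (t : ℝ) : 0 < Phibar t := by
  rw [Phibar]
  rw [setIntegral_pos_iff_support_of_nonneg_ae (ae_of_all _ fun s => (gphi_pos s).le)
    gphi_integrable.integrableOn]
  have hsupp : Function.support gphi = Set.univ := by
    ext s; simp [Function.mem_support, (gphi_pos s).ne']
  rw [hsupp, Set.univ_inter, Real.volume_Ioi]
  exact ENNReal.zero_lt_top

lemma Phibar_diff_ge {a b : ℝ} (ha : 0 ≤ a) (hab : a ≤ b) :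
    (b - a) * gphi b ≤ Phibar a - Phibar b := by
  rw [Phibar_diff hab]
  have h : ∫ s in Set.Ioc a b, gphi b ≤ ∫ s in Set.Ioc a b, gphi s := by
    refine setIntegral_mono_on (integrableOn_const ?_)
      gphi_integrable.integrableOn measurableSet_Ioc fun s hs => ?_
    · rw [Real.volume_Ioc]; exact ENNReal.ofReal_ne_top
    · exact gphi_anti (le_trans ha hs.1.le) hs.2
  rw [setIntegral_const, Real.volume_real_Ioc_of_le hab, smul_eq_mul] at h
  exact h

lemma Phibar_lipschitz {a b : ℝ} (hab : a ≤ b) :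
    Phibar a - Phibar b ≤ (Real.sqrt (2 * Real.pi))⁻¹ * (b - a) := by
  rw [Phibar_diff hab]
  have h : ∫ s in Set.Ioc a b, gphi s ≤ ∫ s in Set.Ioc a b, (Real.sqrt (2 * Real.pi))⁻¹ := by
    refine setIntegral_mono_on gphi_integrable.integrableOn
      (integrableOn_const ?_) measurableSet_Ioc fun s _ => ?_
    · rw [Real.volume_Ioc]; exact ENNReal.ofReal_ne_top
    · rw [gphi]
      have : Real.exp (-(s ^ 2) / 2) ≤ 1 := Real.exp_le_one_iff.2 (by nlinarith [sq_nonneg s])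
      nlinarith [Real.sqrt_nonneg (2 * Real.pi), this,
        inv_nonneg.2 (Real.sqrt_nonneg (2 * Real.pi))]
  rw [setIntegral_const, Real.volume_real_Ioc_of_le hab, smul_eq_mul] at h
  linarith [h]

lemma Phibar_dist (a b : ℝ) :
    |Phibar a - Phibar b| ≤ (Real.sqrt (2 * Real.pi))⁻¹ * |a - b| := by
  rcases le_total a b with h | h
  · have h1 := Phibar_lipschitz h
    have h2 : Phibar b ≤ Phibar a := Phibar_anti h
    rw [abs_of_nonneg (by linarith), abs_of_nonpos (by linarith)]
    linarith
  · have h1 := Phibar_lipschitz h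
    have h2 : Phibar a ≤ Phibar b := Phibar_anti h
    rw [abs_of_nonpos (by linarith), abs_of_nonneg (by linarith)]
    linarith

lemma Phibar_continuous : Continuous Phibar := by
  have := LipschitzWith.of_dist_le_mul (K := Real.toNNReal ((Real.sqrt (2 * Real.pi))⁻¹))
    (f := Phibar) (fun a b => ?_) |>.continuous
  · exact this
  · rw [Real.dist_eq, Real.dist_eq, Real.coe_toNNReal _ (by positivity)]
    exact Phibar_dist a b

lemma Phibar_zero : Phibar 0 = 1 / 2 := by
  have htot : ∫ s, gphi s = 1 := by
    rw [gphi_eq]; exact integral_gaussianPDFReal_eq_one 0 one_ne_zero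
  have hsplit : (∫ s in Set.Iic (0 : ℝ), gphi s) + ∫ s in Set.Ioi (0 : ℝ), gphi s = 1 := by
    rw [intervalIntegral.integral_Iic_add_Ioi gphi_integrable.integrableOn gphi_integrable.integrableOn, htot]
  have hsym : ∫ s in Set.Iic (0 : ℝ), gphi s = Phibar 0 := by
    rw [Phibar]
    have h := integral_comp_neg_Ioi (c := 0) gphi
    simp only [neg_zero] at h
    rw [← h]
    exact setIntegral_congr_fun measurableSet_Ioi fun s _ => gphi_even s
  rw [Phibar] at hsym ⊢
  linarith

/-- Mills-type bound : `s * Phibar s ≤ gphi s` for `s ≥ 0`. -/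
lemma mills {s : ℝ} (hs : 0 ≤ s) : s * Phibar s ≤ gphi s := by
  have hderiv : ∀ u ∈ Set.Ici s, HasDerivAt (fun u => -gphi u) (u * gphi u) u := by
    intro u _
    have h1 : HasDerivAt (fun u : ℝ => -(u ^ 2) / 2) (-u) u := by
      have h := (hasDerivAt_pow 2 u).neg.div_const 2
      refine h.congr_deriv ?_
      push_cast
      ring
    have h2 := (h1.exp.const_mul ((Real.sqrt (2 * Real.pi))⁻¹)).neg
    have h3 : (fun u : ℝ => -gphi u)
        = fun u : ℝ => -((Real.sqrt (2 * Real.pi))⁻¹ * Real.exp (-(u ^ 2) / 2)) := rfl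
    rw [h3]
    refine h2.congr_deriv ?_
    simp only [gphi]
    ring
  have hint : IntegrableOn (fun u => u * gphi u) (Set.Ioi s) := by
    have h0 : Integrable (fun u : ℝ => u * Real.exp (-(1 / 2) * u ^ 2)) :=
      integrable_mul_exp_neg_mul_sq (by norm_num)
    have : Integrable (fun u : ℝ => u * gphi u) := by
      have := (h0.const_mul ((Real.sqrt (2 * Real.pi))⁻¹))
      refine this.congr ?_
      refine ae_of_all _ fun u => ?_
      simp only [gphi]
      ring_nf
    exact this.integrableOn
  have htend : Tendsto (fun u => -gphi u) atTop (nhds 0) := by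
    rw [show (0 : ℝ) = -((Real.sqrt (2 * Real.pi))⁻¹ * 0) by ring]
    refine Tendsto.neg (Tendsto.const_mul _ ?_)
    refine Real.tendsto_exp_atBot.comp ?_
    have h : Tendsto (fun u : ℝ => u ^ 2) atTop atTop := tendsto_pow_atTop two_ne_zero
    have h2 : Tendsto (fun u : ℝ => -(u ^ 2)) atTop atBot := tendsto_neg_atBot_iff.mpr h
    exact h2.atBot_div_const (by norm_num)
  have hFTC : ∫ u in Set.Ioi s, u * gphi u = 0 - (-gphi s) :=
    integral_Ioi_of_hasDerivAt_of_tendsto' hderiv hint htend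
  have hmono : ∫ u in Set.Ioi s, s * gphi u ≤ ∫ u in Set.Ioi s, u * gphi u := by
    refine setIntegral_mono_on (gphi_integrable.integrableOn.const_mul s) hint
      measurableSet_Ioi fun u hu => ?_
    exact mul_le_mul_of_nonneg_right (le_of_lt hu) (gphi_pos u).le
  rw [integral_const_mul] at hmono
  rw [hFTC] at hmono
  simpa [Phibar] using hmono

lemma Phibar_tail {b : ℝ} (hb : 2 ≤ b) : Phibar b ≤ Real.exp (-b) := by
  have h1 : b * Phibar b ≤ gphi b := mills (by linarith)
  have h2 : gphi b ≤ Real.exp (-(b ^ 2) / 2) := by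
    rw [gphi]
    have hsq : (1 : ℝ) ≤ Real.sqrt (2 * Real.pi) := by
      rw [show (1 : ℝ) = Real.sqrt 1 by simp]
      exact Real.sqrt_le_sqrt (by nlinarith [Real.pi_gt_three])
    nlinarith [Real.exp_pos (-(b ^ 2) / 2), inv_le_one_of_one_le₀ hsq,
      inv_nonneg.2 (Real.sqrt_nonneg (2 * Real.pi))]
  have h3 : Real.exp (-(b ^ 2) / 2) ≤ Real.exp (-b) := Real.exp_le_exp.2 (by nlinarith)
  have h4 := Phibar_nonneg b
  nlinarith [h1, h2, h3]

lemma Phibar_exists {r : ℝ} (h0 : 0 < r) (h1 : r ≤ 0.4) : ∃ y, Phibar y = r := by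
  set b : ℝ := max 2 (-Real.log r) with hb
  have hb2 : 2 ≤ b := le_max_left _ _
  have hbl : -Real.log r ≤ b := le_max_right _ _
  have hPb : Phibar b ≤ r := by
    refine (Phibar_tail hb2).trans ?_
    rw [show r = Real.exp (Real.log r) from (Real.exp_log h0).symm]
    exact Real.exp_le_exp.2 (by linarith)
  have hP0 : r ≤ Phibar 0 := by rw [Phibar_zero]; norm_num at h1 ⊢; linarith
  have hmem : r ∈ Set.Icc (Phibar b) (Phibar 0) := ⟨hPb, hP0⟩
  have := intermediate_value_Icc' (by linarith : (0:ℝ) ≤ b) Phibar_continuous.continuousOn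
  obtain ⟨y, _, hy⟩ := this hmem
  exact ⟨y, hy⟩

/-- `-log(1-u) ≥ u + u²/2` on `[0,1)`. -/
lemma neg_log_one_sub {u : ℝ} (h0 : 0 ≤ u) (h1 : u < 1) :
    u + u ^ 2 / 2 ≤ -Real.log (1 - u) := by
  set f : ℝ → ℝ := fun t => -Real.log (1 - t) - t - t ^ 2 / 2 with hf
  have hderiv : ∀ t ∈ Set.Ico (0 : ℝ) 1, HasDerivAt f ((1 - t)⁻¹ - 1 - t) t := by
    intro t ht
    have hne : 1 - t ≠ 0 := by cases ht; intro h; linarith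
    have h1' : HasDerivAt (fun t : ℝ => 1 - t) (-1) t := by
      simpa using (hasDerivAt_id t).const_sub 1
    have h2 : HasDerivAt (fun t : ℝ => Real.log (1 - t)) (-1 / (1 - t)) t :=
      (Real.hasDerivAt_log hne).comp t h1' |>.congr_deriv (by ring)
    have h3 : HasDerivAt (fun t : ℝ => t ^ 2 / 2) t t := by
      simpa using (hasDerivAt_pow 2 t).div_const 2
    have := (h2.neg.sub (hasDerivAt_id t)).sub h3
    refine this.congr_deriv ?_
    field_simp
  have hmono : MonotoneOn f (Set.Icc 0 u) := by
    have hsub : Set.Icc (0 : ℝ) u ⊆ Set.Ico (0 : ℝ) 1 := fun t ht =>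
      ⟨ht.1, lt_of_le_of_lt ht.2 h1⟩
    refine monotoneOn_of_deriv_nonneg (convex_Icc 0 u) ?_ ?_ ?_
    · exact fun t ht => ((hderiv t (hsub ht)).continuousAt).continuousWithinAt
    · intro t ht
      rw [interior_Icc] at ht
      exact ((hderiv t (hsub ⟨ht.1.le, ht.2.le⟩)).differentiableAt).differentiableWithinAt
    · intro t ht
      rw [interior_Icc] at ht
      have ht' := hsub ⟨ht.1.le, ht.2.le⟩
      rw [(hderiv t ht').deriv]
      have h1t : 0 < 1 - t := by
        have := ht'.2; linarith
      have hc : (1 - t) * (1 - t)⁻¹ = 1 := mul_inv_cancel₀ h1t.ne'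
      have hinv : 0 < (1 - t)⁻¹ := inv_pos.2 h1t
      have ht0 : 0 ≤ t := ht'.1
      nlinarith [sq_nonneg t, hc, hinv, h1t]
  have := hmono ⟨le_refl 0, h0⟩ ⟨h0, le_refl u⟩ h0
  simp only [hf, Real.log_one, sub_zero, neg_zero, zero_pow, ne_eq] at this
  norm_num at this
  linarith

/-- Characterization of the order statistic. -/
lemma orderStat_le_iff {n : ℕ} (ξ : Fin n → ℝ) {q : ℕ} (hq : 1 ≤ q) (hqn : q ≤ n) (c : ℝ) :
    orderStat ξ q ≤ c ↔ q ≤ (Finset.univ.filter fun i => ξ i ≤ c).card := by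
  classical
  have hn : 0 < n := lt_of_lt_of_le hq hqn
  set S : Set ℝ := {t : ℝ | q ≤ (Finset.univ.filter fun i => ξ i ≤ t).card} with hS
  have hup : ∀ {t t' : ℝ}, t ≤ t' → t ∈ S → t' ∈ S := by
    intro t t' htt ht
    refine le_trans ht (Finset.card_le_card ?_)
    intro i hi
    simp only [Finset.mem_filter] at hi ⊢
    exact ⟨hi.1, le_trans hi.2 htt⟩
  have hmem : ∀ t ∈ S, ∃ i : Fin n, ξ i ≤ t ∧ ξ i ∈ S := by
    intro t ht
    have hT : (Finset.univ.filter fun i => ξ i ≤ t).Nonempty :=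
      Finset.card_pos.mp (lt_of_lt_of_le hq ht)
    obtain ⟨i0, hi0, hival⟩ := Finset.exists_mem_eq_sup' hT ξ
    have hat : (Finset.univ.filter fun i => ξ i ≤ t).sup' hT ξ ≤ t :=
      Finset.sup'_le hT ξ fun i hi => (Finset.mem_filter.mp hi).2
    refine ⟨i0, ?_, ?_⟩
    · rw [hival] at hat; exact hat
    · refine le_trans ht (Finset.card_le_card fun i hi => ?_)
      refine Finset.mem_filter.mpr ⟨Finset.mem_univ _, ?_⟩
      rw [← hival]
      exact Finset.le_sup' ξ hi
  have hvne : (Finset.univ : Finset (Fin n)).Nonempty := Finset.univ_nonempty_iff.mpr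
    (Fin.pos_iff_nonempty.mp hn)
  have htop : (Finset.univ.sup' hvne ξ) ∈ S := by
    have heq : (Finset.univ.filter fun i => ξ i ≤ Finset.univ.sup' hvne ξ) = Finset.univ :=
      Finset.filter_true_of_mem fun i _ => Finset.le_sup' ξ (Finset.mem_univ i)
    show q ≤ _
    rw [heq, Finset.card_univ, Fintype.card_fin]
    exact hqn
  have hne : S.Nonempty := ⟨_, htop⟩
  set W : Finset ℝ := (Finset.univ.image ξ).filter (· ∈ S) with hW
  have hWne : W.Nonempty := by
    obtain ⟨i, _, hiS⟩ := hmem _ htop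
    exact ⟨ξ i, Finset.mem_filter.mpr ⟨Finset.mem_image_of_mem ξ (Finset.mem_univ i), hiS⟩⟩
  set w : ℝ := W.min' hWne with hw
  have hwS : w ∈ S := (Finset.mem_filter.mp (W.min'_mem hWne)).2
  have hlb : ∀ t ∈ S, w ≤ t := by
    intro t ht
    obtain ⟨i, hit, hiS⟩ := hmem t ht
    refine le_trans (Finset.min'_le W (ξ i) ?_) hit
    exact Finset.mem_filter.mpr ⟨Finset.mem_image_of_mem ξ (Finset.mem_univ i), hiS⟩
  have hinf : sInf S = w :=
    le_antisymm (csInf_le ⟨w, fun t ht => hlb t ht⟩ hwS) (le_csInf hne hlb)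
  rw [orderStat, ← hS, hinf]
  constructor
  · intro h; exact hup h hwS
  · intro h; exact hlb c h

lemma gauss_Iic_toReal (c : ℝ) : (gaussianReal 0 1 (Set.Iic c)).toReal = Phibar (-c) := by
  have h : gaussianReal 0 1 (Set.Iic c) = ENNReal.ofReal (Phibar (-c)) := by
    rw [gaussianReal_apply_eq_integral 0 one_ne_zero]
    congr 1
    have h1 : ∫ u in Set.Iic c, gaussianPDFReal 0 1 u = ∫ u in Set.Iic c, gphi u := by
      rw [gphi_eq]
    rw [h1]
    calc ∫ u in Set.Iic c, gphi u = ∫ u in Set.Iic c, gphi (-u) :=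
          setIntegral_congr_fun measurableSet_Iic fun u _ => (gphi_even u).symm
      _ = ∫ u in Set.Ioi (-c), gphi u := integral_comp_neg_Iic c gphi
      _ = Phibar (-c) := rfl
  rw [h, ENNReal.toReal_ofReal (Phibar_nonneg _)]

lemma gauss_Ioi_toReal (c : ℝ) : (gaussianReal 0 1 (Set.Ioi c)).toReal = 1 - Phibar (-c) := by
  have hco : Set.Ioi c = (Set.Iic c)ᶜ := (Set.compl_Iic).symm
  rw [hco, prob_compl_eq_one_sub measurableSet_Iic, ENNReal.toReal_sub_of_le
    prob_le_one ENNReal.one_ne_top, ENNReal.toReal_one, gauss_Iic_toReal]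

lemma mgf_indicator {Ω : Type*} [MeasurableSpace Ω] (P : Measure Ω) [IsProbabilityMeasure P]
    (f : Ω → ℝ) (hf : Measurable f) (hl : Measure.map f P = gaussianReal 0 1) (c lam : ℝ) :
    mgf (fun ω => if f ω ≤ c then (1 : ℝ) else 0) P lam
      = Phibar (-c) * Real.exp lam + (1 - Phibar (-c)) := by
  have hgmeas : Measurable (fun u : ℝ => if u ≤ c then (1 : ℝ) else 0) :=
    Measurable.ite measurableSet_Iic measurable_const measurable_const
  have hemeas : AEStronglyMeasurable (fun u : ℝ => Real.exp (lam * if u ≤ c then (1 : ℝ) else 0))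
      (Measure.map f P) :=
    ((measurable_const.mul hgmeas).exp).aestronglyMeasurable
  rw [mgf]
  calc ∫ ω, Real.exp (lam * if f ω ≤ c then (1 : ℝ) else 0) ∂P
      = ∫ u, Real.exp (lam * if u ≤ c then (1 : ℝ) else 0) ∂(Measure.map f P) :=
        (integral_map hf.aemeasurable hemeas).symm
    _ = ∫ u, Real.exp (lam * if u ≤ c then (1 : ℝ) else 0) ∂(gaussianReal 0 1) := by rw [hl]
    _ = Phibar (-c) * Real.exp lam + (1 - Phibar (-c)) := by
        have h2 : (fun u : ℝ => Real.exp (lam * if u ≤ c then (1 : ℝ) else 0))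
            = (Set.Iic c).piecewise (fun _ => Real.exp lam) (fun _ => (1 : ℝ)) := by
          funext u
          by_cases h : u ≤ c
          · simp [Set.piecewise, Set.mem_Iic, h]
          · simp [Set.piecewise, Set.mem_Iic, h]
        rw [h2, integral_piecewise measurableSet_Iic
          (integrableOn_const (measure_ne_top _ _))
          (integrableOn_const (measure_ne_top _ _))]
        rw [setIntegral_const, setIntegral_const, Set.compl_Iic, measureReal_def, measureReal_def, gauss_Iic_toReal,
          gauss_Ioi_toReal]
        simp [smul_eq_mul]

lemma key_aux {A B L x : ℝ} (hB : 0 < B)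
    (hlog : (B - A) / B + ((B - A) / B) ^ 2 / 2 ≤ L)
    (h7 : 2 * x * B ≤ (B - A) ^ 2) : B - A + x ≤ L * B := by
  have h1 := mul_le_mul_of_nonneg_right hlog hB.le
  have h2 : ((B - A) / B + ((B - A) / B) ^ 2 / 2) * B = (B - A) + (B - A) ^ 2 / (2 * B) := by
    field_simp
  have h3 : x ≤ (B - A) ^ 2 / (2 * B) := by
    rw [le_div_iff₀ (by positivity)]
    nlinarith
  nlinarith [h1, h2, h3]

/-- Chernoff-type arithmetic bound. -/
lemma chernoff_arith (n q : ℕ) (p x : ℝ) (hq : 1 ≤ q) (hn : 0 < (n : ℝ)) (hp : 0 < p)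
    (hx0 : 0 < x)
    (hnp : (n : ℝ) * p ≤ q - Real.sqrt (2 * x * q)) :
    Real.exp (-(Real.log ((q : ℝ) / (n * p))) * q) *
      (p * Real.exp (Real.log ((q : ℝ) / (n * p))) + (1 - p)) ^ n ≤ Real.exp (-x) := by
  have hq1 : (1 : ℝ) ≤ q := by exact_mod_cast hq
  have hqpos : (0 : ℝ) < q := by linarith
  have hd : 0 < Real.sqrt (2 * x * q) := Real.sqrt_pos.2 (by positivity)
  have hnp0 : 0 < (n : ℝ) * p := by positivity
  have hratio : 1 ≤ (q : ℝ) / (n * p) := by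
    rw [le_div_iff₀ hnp0]; linarith [hnp, hd]
  have hlam0 : 0 ≤ Real.log ((q : ℝ) / (n * p)) := Real.log_nonneg hratio
  have hexpl : Real.exp (Real.log ((q : ℝ) / (n * p))) = (q : ℝ) / (n * p) :=
    Real.exp_log (by positivity)
  have hpe : p * Real.exp (Real.log ((q : ℝ) / (n * p))) = (q : ℝ) / n := by
    rw [hexpl]; field_simp
  set lam := Real.log ((q : ℝ) / (n * p)) with hlam
  -- base of the power
  have hbase : p * Real.exp lam + (1 - p) = 1 - p + (q : ℝ) / n := by rw [hpe]; ring
  have hbase_le : 1 - p + (q : ℝ) / n ≤ Real.exp ((q : ℝ) / n - p) := by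
    have := Real.add_one_le_exp ((q : ℝ) / n - p)
    linarith
  have hbase_nonneg : 0 ≤ 1 - p + (q : ℝ) / n := by
    have : p ≤ (q : ℝ) / n := by rw [le_div_iff₀ hn]; nlinarith
    linarith
  have hpow : (1 - p + (q : ℝ) / n) ^ n ≤ Real.exp ((q : ℝ) - n * p) := by
    calc (1 - p + (q : ℝ) / n) ^ n ≤ (Real.exp ((q : ℝ) / n - p)) ^ n :=
          pow_le_pow_left₀ hbase_nonneg hbase_le n
      _ = Real.exp ((n : ℝ) * ((q : ℝ) / n - p)) := by
          rw [← Real.exp_nat_mul]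
      _ = Real.exp ((q : ℝ) - n * p) := by
          congr 1; field_simp
  -- the exponent inequality
  have hu : Real.log ((q : ℝ) / (n * p)) = -Real.log (1 - ((q : ℝ) - n * p) / q) := by
    have h1 : 1 - ((q : ℝ) - n * p) / q = (n * p) / q := by field_simp; ring
    rw [h1, ← Real.log_inv]
    congr 1
    field_simp
  have hu0 : 0 ≤ ((q : ℝ) - n * p) / q := by
    apply div_nonneg _ hqpos.le; nlinarith
  have hu1 : ((q : ℝ) - n * p) / q < 1 := by
    rw [div_lt_one hqpos]; nlinarith
  have hlog := neg_log_one_sub hu0 hu1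
  rw [← hu] at hlog
  have hd2 : Real.sqrt (2 * x * q) ^ 2 = 2 * x * q := Real.sq_sqrt (by positivity)
  have hdle : Real.sqrt (2 * x * q) ≤ (q : ℝ) - n * p := by nlinarith
  have h7 : 2 * x * (q : ℝ) ≤ ((q : ℝ) - n * p) ^ 2 := by nlinarith [hd2, hdle, hd.le]
  have hkey : (q : ℝ) - n * p + x ≤ lam * q := key_aux hqpos hlog h7
  calc Real.exp (-lam * q) * (p * Real.exp lam + (1 - p)) ^ n
      ≤ Real.exp (-lam * q) * Real.exp ((q : ℝ) - n * p) := by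
        rw [hbase]
        exact mul_le_mul_of_nonneg_left hpow (Real.exp_pos _).le
    _ = Real.exp (-lam * q + ((q : ℝ) - n * p)) := by rw [← Real.exp_add]
    _ ≤ Real.exp (-x) := Real.exp_le_exp.2 (by linarith [hkey])

end OSD

set_option maxHeartbeats 1000000 in
theorem order_statistic_left_deviation
    {Ω : Type*} [MeasurableSpace Ω] (P : Measure Ω) [IsProbabilityMeasure P]
    (n : ℕ) (ξ : Fin n → Ω → ℝ)
    (hmeas : ∀ i, Measurable (ξ i))
    (hindep : iIndepFun ξ P)
    (hlaw : ∀ i, Measure.map (ξ i) P = gaussianReal 0 1)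
    (q : ℕ) (hq : 1 ≤ q) (hqn : (q : ℝ) ≤ 0.4 * n)
    (m : ℝ) (hm : m = PhibarInv ((q : ℝ) / n)) (hm0 : 0 ≤ m)
    (x : ℝ) (hx0 : 0 < x) (hx : x ≤ (q : ℝ) / 8) :
    (P {ω | orderStat (fun i => ξ i ω) q + m ≤ -(2 / m) * Real.sqrt (2 * x / q)}).toReal ≤
      Real.exp (-x) := by
  classical
  have hq1 : (1 : ℝ) ≤ q := by exact_mod_cast hq
  have hn0 : (0 : ℝ) < n := by linarith
  have hqn' : q ≤ n := by
    have h : (q : ℝ) ≤ n := by linarith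
    exact_mod_cast h
  have hrpos : 0 < (q : ℝ) / n := by positivity
  have hr04 : (q : ℝ) / n ≤ 0.4 := by rw [div_le_iff₀ hn0]; linarith
  have hPm : Phibar m = (q : ℝ) / n := by
    rw [hm]; exact Function.invFun_eq (OSD.Phibar_exists hrpos hr04)
  have hmpos : 0 < m := by
    rcases hm0.lt_or_eq with h | h
    · exact h
    · rw [← h, OSD.Phibar_zero] at hPm
      norm_num at hr04
      linarith
  set tt : ℝ := 2 / m * Real.sqrt (2 * x / q) with htt
  have htt0 : 0 ≤ tt := by positivity
  set c : ℝ := -(m + tt) with hcdef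
  set p : ℝ := Phibar (m + tt) with hpdef
  have hp0 : 0 < p := OSD.Phibar_pos _
  -- auxiliary sqrt facts
  have hsq : Real.sqrt (2 * x / q) * (q : ℝ) = Real.sqrt (2 * x * q) := by
    rw [show (q : ℝ) = Real.sqrt ((q : ℝ) ^ 2) from (Real.sqrt_sq (by positivity)).symm,
      ← Real.sqrt_mul (by positivity)]
    congr 1
    field_simp
    rw [Real.sq_sqrt (by positivity)]
  have hdq : Real.sqrt (2 * x * q) ≤ (q : ℝ) / 2 := by
    have h1 : 2 * x * (q : ℝ) ≤ ((q : ℝ) / 2) ^ 2 := by nlinarith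
    calc Real.sqrt (2 * x * q) ≤ Real.sqrt (((q : ℝ) / 2) ^ 2) := Real.sqrt_le_sqrt h1
      _ = (q : ℝ) / 2 := Real.sqrt_sq (by positivity)
  -- Key 1 : n * p ≤ q - sqrt (2 x q)
  have hkey1 : (n : ℝ) * p ≤ (q : ℝ) - Real.sqrt (2 * x * q) := by
    rcases le_or_gt p ((q : ℝ) / n / 2) with hcase | hcase
    · have h2 : (n : ℝ) * p ≤ (q : ℝ) / 2 := by
        calc (n : ℝ) * p ≤ (n : ℝ) * ((q : ℝ) / n / 2) :=
              mul_le_mul_of_nonneg_left hcase hn0.le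
          _ = (q : ℝ) / 2 := by field_simp
      linarith
    · have hd1 : tt * gphi (m + tt) ≤ Phibar m - p := by
        have h := OSD.Phibar_diff_ge hm0 (show m ≤ m + tt by linarith)
        rw [add_sub_cancel_left] at h
        exact h
      have hd2 : (m + tt) * p ≤ gphi (m + tt) := OSD.mills (by linarith)
      have e1 : tt * ((m + tt) * p) ≤ tt * gphi (m + tt) :=
        mul_le_mul_of_nonneg_left hd2 htt0
      have e2 : tt * (m * p) ≤ tt * ((m + tt) * p) := by nlinarith [sq_nonneg tt, hp0.le]
      have e3 : tt * (m * p) = 2 * Real.sqrt (2 * x / q) * p := by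
        rw [htt]; field_simp
      have e4 : Real.sqrt (2 * x / q) * ((q : ℝ) / n) ≤ 2 * Real.sqrt (2 * x / q) * p := by
        have hs0 : 0 ≤ Real.sqrt (2 * x / q) := Real.sqrt_nonneg _
        nlinarith [hcase, hs0]
      have e5 : Real.sqrt (2 * x / q) * ((q : ℝ) / n) ≤ Phibar m - p := by
        rw [e3] at e2
        linarith
      have e6 : Real.sqrt (2 * x * q) ≤ (n : ℝ) * (Phibar m - p) :=
        calc Real.sqrt (2 * x * q) = Real.sqrt (2 * x / q) * q := hsq.symm
          _ = (n : ℝ) * (Real.sqrt (2 * x / q) * ((q : ℝ) / n)) := by field_simp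
          _ ≤ (n : ℝ) * (Phibar m - p) := mul_le_mul_of_nonneg_left e5 hn0.le
      have e7 : (n : ℝ) * Phibar m = q := by rw [hPm]; field_simp
      have e8 : (n : ℝ) * (Phibar m - p) = (q : ℝ) - (n : ℝ) * p := by
        rw [mul_sub, e7]
      linarith [e6, e8]
  -- the indicator variables
  set X : Fin n → Ω → ℝ := fun i ω => if ξ i ω ≤ c then (1 : ℝ) else 0 with hXdef
  have hgmeas : Measurable (fun u : ℝ => if u ≤ c then (1 : ℝ) else 0) :=
    Measurable.ite measurableSet_Iic measurable_const measurable_const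
  have hXmeas : ∀ i, Measurable (X i) := fun i => hgmeas.comp (hmeas i)
  have hindepX : iIndepFun X P :=
    hindep.comp (fun _ => fun u : ℝ => if u ≤ c then (1 : ℝ) else 0) fun _ => hgmeas
  have hnegc : -c = m + tt := by rw [hcdef]; ring
  have hmgf : ∀ (i : Fin n) (lam : ℝ), mgf (X i) P lam = p * Real.exp lam + (1 - p) := by
    intro i lam
    have h := OSD.mgf_indicator P (ξ i) (hmeas i) (hlaw i) c lam
    rw [hnegc] at h
    exact h
  -- event rewriting
  have hset : {ω | orderStat (fun i => ξ i ω) q + m ≤ -(2 / m) * Real.sqrt (2 * x / q)}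
      = {ω | (q : ℝ) ≤ (∑ i, X i) ω} := by
    ext ω
    simp only [Set.mem_setOf_eq]
    have h1 : orderStat (fun i => ξ i ω) q + m ≤ -(2 / m) * Real.sqrt (2 * x / q)
        ↔ orderStat (fun i => ξ i ω) q ≤ c := by
      rw [hcdef, htt]
      constructor <;> intro <;> linarith
    have h3 : ((Finset.univ.filter fun i => ξ i ω ≤ c).card : ℝ) = (∑ i, X i) ω := by
      rw [Finset.sum_apply, Finset.card_filter]
      push_cast
      rfl
    rw [h1, OSD.orderStat_le_iff _ hq hqn', ← h3, Nat.cast_le]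
  rw [hset]
  -- Chernoff
  have hd : 0 < Real.sqrt (2 * x * q) := Real.sqrt_pos.2 (by positivity)
  have hnp0 : 0 < (n : ℝ) * p := by positivity
  have hratio : 1 ≤ (q : ℝ) / ((n : ℝ) * p) := by
    rw [le_div_iff₀ hnp0]; linarith [hkey1, hd]
  have hlam0 : 0 ≤ Real.log ((q : ℝ) / ((n : ℝ) * p)) := Real.log_nonneg hratio
  have hboundX : ∀ (i : Fin n) (ω : Ω), 0 ≤ X i ω ∧ X i ω ≤ 1 := by
    intro i ω
    simp only [hXdef]
    split_ifs <;> norm_num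
  have hSmeas : Measurable (∑ i, X i) := by
    have : Measurable fun ω => ∑ i : Fin n, X i ω :=
      Finset.measurable_sum Finset.univ fun i _ => hXmeas i
    convert this using 1
    funext ω
    exact Finset.sum_apply _ _ _
  have hint : Integrable (fun ω => Real.exp (Real.log ((q : ℝ) / ((n : ℝ) * p)) * (∑ i, X i) ω)) P := by
    refine Integrable.mono' (integrable_const (Real.exp (Real.log ((q : ℝ) / ((n : ℝ) * p)) * n)))
      ((hSmeas.const_mul _).exp.aestronglyMeasurable) (ae_of_all _ fun ω => ?_)
    rw [Real.norm_eq_abs, Real.abs_exp]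
    refine Real.exp_le_exp.2 (mul_le_mul_of_nonneg_left ?_ hlam0)
    rw [Finset.sum_apply]
    calc ∑ i : Fin n, X i ω ≤ ∑ _i : Fin n, (1 : ℝ) :=
          Finset.sum_le_sum fun i _ => (hboundX i ω).2
      _ = n := by simp
  have hchern := measure_ge_le_exp_mul_mgf (μ := P) (X := ∑ i, X i) ((q : ℝ)) hlam0 hint
  have hmgfsum : mgf (∑ i, X i) P (Real.log ((q : ℝ) / ((n : ℝ) * p)))
      = (p * Real.exp (Real.log ((q : ℝ) / ((n : ℝ) * p))) + (1 - p)) ^ n := by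
    rw [show (∑ i, X i) = ∑ i ∈ Finset.univ, X i from rfl,
      hindepX.mgf_sum hXmeas Finset.univ]
    rw [Finset.prod_congr rfl fun i _ => hmgf i _, Finset.prod_const, Finset.card_univ,
      Fintype.card_fin]
  rw [hmgfsum] at hchern
  refine le_trans hchern ?_
  exact OSD.chernoff_arith n q p x hq hn0 hp0 hx0 hkey1
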